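/- The only common zero in ℂ³ of the three partial derivatives of the Klein quartic Q = z₀³z₂ + z₁³z₀ + z₂³z₁ is the origin; that is, the plane projective quartic curve {Q = 0} is smooth. -/
import Mathlib


open MvPolynomial

/-- Klein's quartic `Q = z₀³z₂ + z₁³z₀ + z₂³z₁`. -/
noncomputable def KleinQuartic : MvPolynomial (Fin 3) ℂ :=
  X 0 ^ 3 * X 2 + X 1 ^ 3 * X 0 + X 2 ^ 3 * X 1

/-- The only common zero in ℂ³ of the three partial derivatives of the Klein quartic is the
origin; that is, the plane projective quartic curve `{Q = 0}` is smooth. -/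
theorem kleinQuartic_smooth :
    ∀ v : Fin 3 → ℂ, (∀ i : Fin 3, eval v (pderiv i KleinQuartic) = 0) → v = 0 := by
  intro v hv
  have h0 := hv 0; have h1 := hv 1; have h2 := hv 2
  simp [KleinQuartic, pderiv_mul, pderiv_pow, pderiv_X, Pi.single_apply] at h0 h1 h2
  set a := v 0 with ha
  set b := v 1 with hb
  set c := v 2 with hc
  have key : (a * b * c) ^ 3 * 28 = 0 := by
    linear_combination
      ((3*a*b^2+c^3)*(a^3+3*b*c^2) - 3*a*b^2*(a^3+3*b*c^2) - 3*b*c^2*(3*a*b^2+c^3)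
        + 9*a*b^3*c^2) * h0
      + (-3*a^2*c*(a^3+3*b*c^2) + 9*a^2*b*c^3) * h1
      + (9*a^3*b^2*c) * h2
  have habc : a * b * c = 0 := by
    have h28 : (28 : ℂ) ≠ 0 := by norm_num
    have := (mul_eq_zero.mp key).resolve_right h28
    exact pow_eq_zero_iff (n := 3) (by norm_num) |>.mp this
  have cube : ∀ x : ℂ, x ^ 3 = 0 → x = 0 := fun x hx =>
    pow_eq_zero_iff (n := 3) (by norm_num) |>.mp hx
  have hzero : a = 0 ∧ b = 0 ∧ c = 0 := by
    rcases mul_eq_zero.mp habc with hab | hc0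
    · rcases mul_eq_zero.mp hab with ha0 | hb0
      · have hb0 : b = 0 := cube b (by linear_combination h0 - c*(3*a)*ha0)
        have hc0 : c = 0 := cube c (by linear_combination h1 - (3*b^2)*ha0)
        exact ⟨ha0, hb0, hc0⟩
      · have ha0 : a = 0 := cube a (by linear_combination h2 - (3*c^2)*hb0)
        have hc0 : c = 0 := cube c (by linear_combination h1 - a*(3*b)*hb0)
        exact ⟨ha0, hb0, hc0⟩
    · have hb0 : b = 0 := cube b (by linear_combination h0 - (3*a^2)*hc0)
      have ha0 : a = 0 := cube a (by linear_combination h2 - b*(3*c)*hc0)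
      exact ⟨ha0, hb0, hc0⟩
  funext i
  fin_cases i
  · exact hzero.1
  · exact hzero.2.1
  · exact hzero.2.2
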